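/- Let G = BS(1,m) = ⟨a, t | t a t^{-1} = a^m⟩ with m odd. Then G is the union of its three subgroups B_1 = ⟨a², t⟩, B_2 = ⟨a², at⟩, and B_3 = ⟨a, t²⟩. -/
import Mathlib


/-- The single defining relator `t a t⁻¹ a⁻ᵐ` of `BS(1,m)`, with `false ↦ a`, `true ↦ t`. -/
def BSrel (m : ℕ) : Set (FreeGroup Bool) :=
  {FreeGroup.of true * FreeGroup.of false * (FreeGroup.of true)⁻¹ *
    (FreeGroup.of false) ^ (-(m : ℤ))}

/-- The Baumslag–Solitar group `BS(1,m) = ⟨a, t ∣ t a t⁻¹ = aᵐ⟩`. -/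
abbrev BS (m : ℕ) := PresentedGroup (BSrel m)

/-- The generator `a` of `BS(1,m)`. -/
def BSa (m : ℕ) : BS m := PresentedGroup.of false

/-- The generator `t` of `BS(1,m)`. -/
def BSt (m : ℕ) : BS m := PresentedGroup.of true

lemma BS_rel (m : ℕ) : BSt m * BSa m * (BSt m)⁻¹ = (BSa m) ^ (m : ℤ) := by
  have h : (PresentedGroup.mk (BSrel m)) (FreeGroup.of true * FreeGroup.of false *
      (FreeGroup.of true)⁻¹ * (FreeGroup.of false) ^ (-(m:ℤ))) = 1 := by
    apply (QuotientGroup.eq_one_iff _).mpr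
    exact Subgroup.subset_normalClosure rfl
  simp only [map_mul, map_inv, map_zpow] at h
  have ha : (PresentedGroup.mk (BSrel m)) (FreeGroup.of false) = BSa m := rfl
  have ht : (PresentedGroup.mk (BSrel m)) (FreeGroup.of true) = BSt m := rfl
  rw [ha, ht, mul_eq_one_iff_eq_inv] at h
  rw [h]
  group

/-- `t * aʳ = a^(r m) * t`. -/
lemma BS_ta (m : ℕ) (r : ℤ) : BSt m * (BSa m) ^ r = (BSa m) ^ (r * m) * BSt m := by
  have h : BSt m * (BSa m) ^ r * (BSt m)⁻¹ = (BSa m) ^ (r * m) := by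
    calc BSt m * (BSa m) ^ r * (BSt m)⁻¹
        = (BSt m * BSa m * (BSt m)⁻¹) ^ r := conj_zpow.symm
    _ = ((BSa m) ^ (m:ℤ)) ^ r := by rw [BS_rel]
    _ = (BSa m) ^ (r * m) := by rw [← zpow_mul, mul_comm]
  rw [← h]; group

/-- `tʲ * aʳ = a^(r mʲ) * tʲ`. -/
lemma BS_tpow (m : ℕ) (j : ℕ) (r : ℤ) :
    (BSt m) ^ (j:ℤ) * (BSa m) ^ r = (BSa m) ^ (r * m ^ j) * (BSt m) ^ (j:ℤ) := by
  induction j generalizing r with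
  | zero => simp
  | succ n ih =>
    have : ((n+1 : ℕ) : ℤ) = (n:ℤ) + 1 := by push_cast; ring
    rw [this, zpow_add, zpow_one, mul_assoc, BS_ta, ← mul_assoc, ih (r * m)]
    rw [mul_assoc]
    congr 2
    ring

/-- The conjugate of `aʳ` by `t⁻¹` as an identity shifting the normal form. -/
lemma BS_shift (m : ℕ) (k ℓ : ℕ) (r : ℤ) :
    (BSt m) ^ (-(k:ℤ)) * (BSa m) ^ r * (BSt m) ^ (ℓ:ℤ) =
    (BSt m) ^ (-(k+1:ℕ):ℤ) * (BSa m) ^ (r * m) * (BSt m) ^ ((ℓ+1:ℕ):ℤ) := by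
  have h : (BSa m) ^ (r * m) = BSt m * (BSa m) ^ r * (BSt m)⁻¹ := by
    rw [eq_mul_inv_iff_mul_eq]; exact (BS_ta m r).symm
  have h1 : ((k+1:ℕ):ℤ) = (k:ℤ) + 1 := by push_cast; ring
  have h2 : ((ℓ+1:ℕ):ℤ) = (ℓ:ℤ) + 1 := by push_cast; ring
  rw [h1, h2, h]
  group

/-- Normal form: every element of `BS(1,m)` is `t⁻ᵏ aʳ tˡ`. -/
lemma BS_normal_form (m : ℕ) (g : BS m) :
    ∃ (k ℓ : ℕ) (r : ℤ),
      g = (BSt m) ^ (-(k:ℤ)) * (BSa m) ^ r * (BSt m) ^ (ℓ:ℤ) := by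
  have hg : g ∈ Subgroup.closure (Set.range (PresentedGroup.of (rels := BSrel m))) := by
    rw [PresentedGroup.closure_range_of]; trivial
  induction hg using Subgroup.closure_induction with
  | mem x hx =>
    obtain ⟨b, rfl⟩ := hx
    cases b with
    | false =>
      exact ⟨0, 0, 1, by simp [BSa]⟩
    | true =>
      exact ⟨0, 1, 0, by simp [BSt]⟩
  | one => exact ⟨0, 0, 0, by simp⟩
  | mul x y _ _ hx hy =>
    obtain ⟨k, ℓ, r, rfl⟩ := hx
    obtain ⟨k', ℓ', r', rfl⟩ := hy
    rcases le_or_gt k' ℓ with h | h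
    · -- ℓ ≥ k' : middle is t^(ℓ-k')
      refine ⟨k, (ℓ - k') + ℓ', r + r' * m ^ (ℓ - k'), ?_⟩
      have hℓ : ℓ = (ℓ - k') + k' := (Nat.sub_add_cancel h).symm
      have key := BS_tpow m (ℓ - k') r'
      set d := ℓ - k' with hd
      have key' : (BSa m) ^ (r' * (m:ℤ) ^ d) =
          (BSt m) ^ (d:ℤ) * (BSa m) ^ r' * ((BSt m) ^ (d:ℤ))⁻¹ := by
        rw [eq_mul_inv_iff_mul_eq]; exact key.symm
      rw [hℓ, zpow_add (BSa m), key']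
      push_cast
      group
    · -- ℓ < k' : middle is t^(-(k'-ℓ))
      refine ⟨k + (k' - ℓ), ℓ', r * m ^ (k' - ℓ) + r', ?_⟩
      have hk : k' = (k' - ℓ) + ℓ := (Nat.sub_add_cancel h.le).symm
      have key := BS_tpow m (k' - ℓ) r
      set d := k' - ℓ with hd
      have key' : (BSa m) ^ (r * (m:ℤ) ^ d) =
          (BSt m) ^ (d:ℤ) * (BSa m) ^ r * ((BSt m) ^ (d:ℤ))⁻¹ := by
        rw [eq_mul_inv_iff_mul_eq]; exact key.symm
      rw [hk, zpow_add (BSa m), key']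
      push_cast
      group
  | inv x _ hx =>
    obtain ⟨k, ℓ, r, rfl⟩ := hx
    exact ⟨ℓ, k, -r, by group⟩

theorem stmt_19 (m : ℕ) (hm : 2 ≤ m) (hmo : Odd m) (g : BS m) :
    g ∈ Subgroup.closure {(BSa m) ^ 2, BSt m} ∨
    g ∈ Subgroup.closure {(BSa m) ^ 2, BSa m * BSt m} ∨
    g ∈ Subgroup.closure {BSa m, (BSt m) ^ 2} := by
  obtain ⟨k, ℓ, r, rfl⟩ := BS_normal_form m g
  -- membership of even powers of a
  have ha2 : ∀ (H : Subgroup (BS m)), (BSa m) ^ 2 ∈ H → ∀ r : ℤ, Even r → (BSa m) ^ r ∈ H := by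
    intro H h2 r ⟨s, hs⟩
    have : (BSa m) ^ r = ((BSa m) ^ 2) ^ s := by
      have h1 : r = 2 * s := by omega
      rw [h1, zpow_mul]
      norm_cast
    rw [this]; exact H.zpow_mem h2 s
  have ht2 : ∀ (H : Subgroup (BS m)), (BSt m) ^ 2 ∈ H → ∀ j : ℤ, Even j → (BSt m) ^ j ∈ H := by
    intro H h2 j ⟨s, hs⟩
    have : (BSt m) ^ j = ((BSt m) ^ 2) ^ s := by
      have h1 : j = 2 * s := by omega
      rw [h1, zpow_mul]
      norm_cast
    rw [this]; exact H.zpow_mem h2 s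
  -- B1 case
  have mem1 : ∀ (k ℓ : ℕ) (r : ℤ), Even r →
      (BSt m) ^ (-(k:ℤ)) * (BSa m) ^ r * (BSt m) ^ (ℓ:ℤ) ∈
        Subgroup.closure {(BSa m) ^ 2, BSt m} := by
    intro k ℓ r hr
    have hta : (BSa m) ^ 2 ∈ Subgroup.closure {(BSa m) ^ 2, BSt m} :=
      Subgroup.subset_closure (by left; rfl)
    have htt : BSt m ∈ Subgroup.closure {(BSa m) ^ 2, BSt m} :=
      Subgroup.subset_closure (by right; rfl)
    exact Subgroup.mul_mem _ (Subgroup.mul_mem _ (Subgroup.zpow_mem _ htt _)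
      (ha2 _ hta r hr)) (Subgroup.zpow_mem _ htt _)
  -- B3 case (both parities even)
  have mem3 : ∀ (k ℓ : ℕ) (r : ℤ), Even k → Even ℓ →
      (BSt m) ^ (-(k:ℤ)) * (BSa m) ^ r * (BSt m) ^ (ℓ:ℤ) ∈
        Subgroup.closure {BSa m, (BSt m) ^ 2} := by
    intro k ℓ r hk hℓ
    have hta : BSa m ∈ Subgroup.closure {BSa m, (BSt m) ^ 2} :=
      Subgroup.subset_closure (by left; rfl)
    have htt : (BSt m) ^ 2 ∈ Subgroup.closure {BSa m, (BSt m) ^ 2} :=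
      Subgroup.subset_closure (by right; rfl)
    refine Subgroup.mul_mem _ (Subgroup.mul_mem _ ?_ (Subgroup.zpow_mem _ hta _)) ?_
    · exact ht2 _ htt _ (by obtain ⟨s, hs⟩ := hk; exact ⟨-s, by push_cast [hs]; ring⟩)
    · exact ht2 _ htt _ (by obtain ⟨s, hs⟩ := hℓ; exact ⟨s, by push_cast [hs]; ring⟩)
  -- B2 case (k even, ℓ odd, r odd)
  have mem2 : ∀ (k ℓ : ℕ) (r : ℤ), Even k → Odd ℓ → Odd r →
      (BSt m) ^ (-(k:ℤ)) * (BSa m) ^ r * (BSt m) ^ (ℓ:ℤ) ∈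
        Subgroup.closure {(BSa m) ^ 2, BSa m * BSt m} := by
    intro k ℓ r hk hℓ hr
    set H := Subgroup.closure {(BSa m) ^ 2, BSa m * BSt m} with hH
    have hta : (BSa m) ^ 2 ∈ H := Subgroup.subset_closure (by left; rfl)
    have hat : BSa m * BSt m ∈ H := Subgroup.subset_closure (by right; rfl)
    -- t² ∈ H
    have htt : (BSt m) ^ 2 ∈ H := by
      have key : (BSa m * BSt m) * (BSa m * BSt m) = (BSa m) ^ ((m:ℤ) + 1) * (BSt m) ^ 2 := by
        have h := BS_ta m 1
        rw [one_mul] at h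
        rw [pow_two]
        calc (BSa m * BSt m) * (BSa m * BSt m)
            = BSa m * (BSt m * (BSa m) ^ (1:ℤ)) * BSt m := by group
        _ = BSa m * ((BSa m) ^ ((m:ℤ)) * BSt m) * BSt m := by rw [h]
        _ = (BSa m) ^ ((m:ℤ) + 1) * (BSt m * BSt m) := by group
      have h2 : (BSt m) ^ 2 = (BSa m) ^ (-((m:ℤ) + 1)) * ((BSa m * BSt m) * (BSa m * BSt m)) := by
        rw [key]; group
      rw [h2]
      refine Subgroup.mul_mem _ ?_ (Subgroup.mul_mem _ hat hat)
      refine ha2 _ hta _ ?_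
      obtain ⟨s, hs⟩ := hmo
      exact ⟨-(s+1), by push_cast [hs]; ring⟩
    -- decompose
    obtain ⟨b, hb⟩ := hℓ
    have hdec : (BSt m) ^ (-(k:ℤ)) * (BSa m) ^ r * (BSt m) ^ (ℓ:ℤ) =
        (BSt m) ^ (-(k:ℤ)) * (BSa m) ^ (r - 1) * (BSa m * BSt m) * (BSt m) ^ ((2*b:ℕ):ℤ) := by
      have : ((ℓ:ℕ):ℤ) = ((2*b:ℕ):ℤ) + 1 := by push_cast [hb]; ring
      rw [this]
      group
    rw [hdec]
    refine Subgroup.mul_mem _ (Subgroup.mul_mem _ (Subgroup.mul_mem _ ?_ ?_) hat) ?_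
    · refine ht2 _ htt _ ?_
      obtain ⟨s, hs⟩ := hk
      exact ⟨-s, by push_cast [hs]; ring⟩
    · refine ha2 _ hta _ ?_
      obtain ⟨s, hs⟩ := hr
      exact ⟨s, by omega⟩
    · exact ht2 _ htt _ ⟨b, by push_cast; ring⟩
  -- main case analysis
  rcases Int.even_or_odd r with hr | hr
  · exact Or.inl (mem1 k ℓ r hr)
  · rcases Nat.even_or_odd k with hk | hk <;> rcases Nat.even_or_odd ℓ with hℓ | hℓ
    · exact Or.inr (Or.inr (mem3 k ℓ r hk hℓ))
    · exact Or.inr (Or.inl (mem2 k ℓ r hk hℓ hr))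
    · -- k odd, ℓ even: shift
      rw [BS_shift]
      exact Or.inr (Or.inl (mem2 (k+1) (ℓ+1) (r * m) hk.add_one
        hℓ.add_one (hr.mul (by exact_mod_cast hmo))))
    · -- k odd, ℓ odd: shift
      rw [BS_shift]
      exact Or.inr (Or.inr (mem3 (k+1) (ℓ+1) (r * m) hk.add_one hℓ.add_one))
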